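/- Integration by parts for the curl operator on a rectangular box with explicit boundary term: let a b : ℝ³ with a i < b i for each i, and let C, D : ℝ³ → ℝ³ be continuously differentiable on an open neighborhood of the closed box Icc a b. Then ∫ x in Icc a b, (⟪curl C x, D x⟫ − ⟪C x, curl D x⟫) equals the outward flux of the field x ↦ C x × D x through the boundary of the box, namely the sum over i ∈ Fin 3 of (the integral of the i-th component of C × D over the face { x ∈ Icc a b : x i = b i }) minus (the integral of the i-th component of C × D over the face { x ∈ Icc a b : x i = a i }), each face integral taken with respect to the (2-dimensional) Lebesgue measure on the face. -/

import Mathlib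

set_option maxHeartbeats 1000000

noncomputable section

/-- `ℝ³`, here realized as functions `Fin 3 → ℝ` (equivalently `EuclideanSpace ℝ (Fin 3)`). -/
abbrev V3 : Type := Fin 3 → ℝ

/-- The Euclidean inner product on `ℝ³`. -/
def inner3 (u v : V3) : ℝ := ∑ i, u i * v i

/-- Partial derivative of a vector field in the `i`-th coordinate direction,
computed via `fderiv ℝ`. -/
def pd (i : Fin 3) (F : V3 → V3) (x : V3) : V3 :=
  fderiv ℝ F x (Pi.single i 1)

/-- The curl of a vector field on `ℝ³`: with coordinates indexed by `0, 1, 2`, its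
components are `(∂₁F₂ − ∂₂F₁, ∂₂F₀ − ∂₀F₂, ∂₀F₁ − ∂₁F₀)`. -/
def curl3 (F : V3 → V3) (x : V3) : V3 :=
  ![pd 1 F x 2 - pd 2 F x 1,
    pd 2 F x 0 - pd 0 F x 2,
    pd 0 F x 1 - pd 1 F x 0]

/-- The integral of `G` over the face `{x ∈ Icc a b : x i = c}` of the box `Icc a b`
(for `c = a i` or `c = b i`), with respect to the 2-dimensional Lebesgue measure on
the face: the face is parametrized orthonormally by its remaining two coordinates. -/
def faceIntegral (G : V3 → ℝ) (a b : V3) (i : Fin 3) (c : ℝ) : ℝ :=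
  ∫ y : Fin 2 → ℝ in Set.Icc (a ∘ i.succAbove) (b ∘ i.succAbove), G (i.insertNth c y)

/-- The cross product on `ℝ³` as a continuous bilinear map. -/
def crossL : V3 →L[ℝ] V3 →L[ℝ] V3 :=
  LinearMap.toContinuousLinearMap
    ((LinearMap.toContinuousLinearMap :
        (V3 →ₗ[ℝ] V3) ≃ₗ[ℝ] (V3 →L[ℝ] V3)).toLinearMap ∘ₗ crossProduct)

@[simp] lemma crossL_apply (u v : V3) : crossL u v = crossProduct u v := by
  simp [crossL]

attribute [irreducible] crossL

open MeasureTheory Set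

/-- Integration by parts for the curl operator on a rectangular box, with the boundary
term expressed as the outward flux of `C × D` through the six faces of the box. -/
theorem curl_integration_by_parts_box (a b : V3) (hab : ∀ i, a i < b i)
    (U : Set V3) (hU : IsOpen U) (hUab : Set.Icc a b ⊆ U)
    (C D : V3 → V3) (hC : ContDiffOn ℝ 1 C U) (hD : ContDiffOn ℝ 1 D U) :
    ∫ x in Set.Icc a b, (inner3 (curl3 C x) (D x) - inner3 (C x) (curl3 D x)) =
      ∑ i : Fin 3,
        (faceIntegral (fun x => crossProduct (C x) (D x) i) a b i (b i)
          - faceIntegral (fun x => crossProduct (C x) (D x) i) a b i (a i)) := by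
  classical
  have hB := crossL.isBoundedBilinearMap
  set f : V3 → V3 := fun x => crossL (C x) (D x) with hf
  set f' : V3 → V3 →L[ℝ] V3 := fun x =>
    (hB.deriv (C x, D x)).comp ((fderiv ℝ C x).prod (fderiv ℝ D x)) with hf'
  have hCd : ∀ x ∈ U, HasFDerivAt C (fderiv ℝ C x) x := fun x hx =>
    ((hC.differentiableOn one_ne_zero).differentiableAt (hU.mem_nhds hx)).hasFDerivAt
  have hDd : ∀ x ∈ U, HasFDerivAt D (fderiv ℝ D x) x := fun x hx =>
    ((hD.differentiableOn one_ne_zero).differentiableAt (hU.mem_nhds hx)).hasFDerivAt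
  have hfd : ∀ x ∈ U, HasFDerivAt f (f' x) x := fun x hx =>
    by have h := (hB.hasFDerivAt (C x, D x)).comp x (HasFDerivAt.prodMk (hCd x hx) (hDd x hx)); exact h
  -- the divergence identity: div (C × D) = ⟪curl C, D⟫ - ⟪C, curl D⟫
  have key : ∀ x ∈ U, (∑ i : Fin 3, f' x (Pi.single i 1) i)
      = inner3 (curl3 C x) (D x) - inner3 (C x) (curl3 D x) := by
    intro x hx
    have hCx : DifferentiableAt ℝ C x := (hCd x hx).differentiableAt
    have hDx : DifferentiableAt ℝ D x := (hDd x hx).differentiableAt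
    simp only [hf', ContinuousLinearMap.comp_apply, ContinuousLinearMap.prod_apply,
      IsBoundedBilinearMap.deriv_apply, crossL_apply, inner3, curl3, pd, cross_apply,
      Fin.sum_univ_three, Pi.add_apply]
    simp only [Matrix.cons_val_zero, Matrix.cons_val_one, Matrix.head_cons,
      Matrix.cons_val_two, Matrix.tail_cons]
    ring
  -- continuity of the derivatives
  have hC' : ContinuousOn (fderiv ℝ C) U := hC.continuousOn_fderiv_of_isOpen hU le_rfl
  have hD' : ContinuousOn (fderiv ℝ D) U := hD.continuousOn_fderiv_of_isOpen hU le_rfl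
  have hCc : ContinuousOn C U := hC.continuousOn
  have hDc : ContinuousOn D U := hD.continuousOn
  have hdivc : ContinuousOn (fun x => ∑ i : Fin 3, f' x (Pi.single i 1) i) U := by
    apply continuousOn_finset_sum
    intro i _
    have hCapp : ContinuousOn (fun x => fderiv ℝ C x (Pi.single i 1)) U :=
      (ContinuousLinearMap.apply ℝ V3 (Pi.single i 1)).continuous.comp_continuousOn hC'
    have hDapp : ContinuousOn (fun x => fderiv ℝ D x (Pi.single i 1)) U :=
      (ContinuousLinearMap.apply ℝ V3 (Pi.single i 1)).continuous.comp_continuousOn hD'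
    have h1 : ContinuousOn (fun x => crossL (C x) (fderiv ℝ D x (Pi.single i 1))) U :=
      by have h := hB.continuous.comp_continuousOn (ContinuousOn.prodMk hCc hDapp); exact h
    have h2 : ContinuousOn (fun x => crossL (fderiv ℝ C x (Pi.single i 1)) (D x)) U :=
      by have h := hB.continuous.comp_continuousOn (ContinuousOn.prodMk hCapp hDc); exact h
    have := (continuous_apply i).comp_continuousOn (h1.add h2)
    convert this using 1
    funext x
    simp [hf', IsBoundedBilinearMap.deriv_apply]
  have Hc : ContinuousOn f (Icc a b) := fun x hx =>
    (hfd x (hUab hx)).continuousAt.continuousWithinAt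
  have Hd : ∀ x ∈ (Set.pi univ fun i => Ioo (a i) (b i)) \ (∅ : Set V3),
      HasFDerivAt f (f' x) x := by
    intro x hx
    refine hfd x (hUab ⟨fun i => (hx.1 i (mem_univ i)).1.le, fun i => (hx.1 i (mem_univ i)).2.le⟩)
  have Hi : IntegrableOn (fun x => ∑ i : Fin 3, f' x (Pi.single i 1) i) (Icc a b) :=
    (hdivc.mono hUab).integrableOn_compact isCompact_Icc
  have main := MeasureTheory.integral_divergence_of_hasFDerivAt_off_countable
    (a := a) (b := b) (fun i => (hab i).le) f f' ∅ countable_empty Hc Hd Hi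
  calc ∫ x in Set.Icc a b, (inner3 (curl3 C x) (D x) - inner3 (C x) (curl3 D x))
      = ∫ x in Set.Icc a b, ∑ i : Fin 3, f' x (Pi.single i 1) i := by
        refine setIntegral_congr_fun measurableSet_Icc fun x hx => ?_
        exact (key x (hUab hx)).symm
    _ = _ := by
        rw [main]
        refine Finset.sum_congr rfl fun i _ => ?_
        simp [faceIntegral, hf]
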